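/- arXiv:1707.07480 — 5 statements merged into one kernel-verified Lean document; each statement's English description precedes it below -/
import Mathlib

section
/- Let H be a finite-dimensional vector space over C with a finite increasing filtration F and a finite decreasing filtration U. Then the natural map from the direct sum over p of (U^p intersect F_p) to H is an isomorphism if and only if Gr^p_U Gr^F_q H = 0 for all p different from q. -/
/-- For a finite-dimensional complex vector space `H` with a finite increasing filtration `F`
and a finite decreasing filtration `U`, the sum map `⊕_p (U^p ∩ F_p) → H` is an isomorphism
iff `Gr^p_U Gr^F_q H = 0` for all `p ≠ q` (expressed as
`U^p ∩ F_q ⊆ (U^{p+1} ∩ F_q) + (U^p ∩ F_{q-1})`). -/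
theorem opposite_iff_bigraded_vanish
    (H : Type*) [AddCommGroup H] [Module ℂ H] [FiniteDimensional ℂ H]
    (F U : ℤ → Submodule ℂ H)
    (hF : Monotone F) (hFbot : ∃ n : ℤ, F n = ⊥) (hFtop : ∃ n : ℤ, F n = ⊤)
    (hU : Antitone U) (hUtop : ∃ n : ℤ, U n = ⊤) (hUbot : ∃ n : ℤ, U n = ⊥) :
    Function.Bijective
        (DirectSum.toModule ℂ ℤ H (fun p : ℤ => (U p ⊓ F p).subtype))
      ↔ ∀ p q : ℤ, p ≠ q → U p ⊓ F q ≤ (U (p + 1) ⊓ F q) ⊔ (U p ⊓ F (q - 1)) := by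
  set A : ℤ → Submodule ℂ H := fun p => U p ⊓ F p with hA
  have hmain : Function.Bijective
      (DirectSum.toModule ℂ ℤ H (fun p : ℤ => (U p ⊓ F p).subtype))
      ↔ DirectSum.IsInternal A := Iff.rfl
  rw [hmain, DirectSum.isInternal_submodule_iff_iSupIndep_and_iSup_eq_top]
  constructor
  · -- internal direct sum ⇒ vanishing of off-diagonal graded pieces
    rintro ⟨hind, htop⟩ p q hpq
    -- first: `U (q+1) ⊓ F q = ⊥` for every `q`
    have hbot : ∀ q : ℤ, U (q + 1) ⊓ F q = ⊥ := by
      intro m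
      have h1 : U (m + 1) ⊓ F m ≤ A m :=
        le_inf (inf_le_left.trans (hU (by omega))) inf_le_right
      have h2 : U (m + 1) ⊓ F m ≤ A (m + 1) :=
        le_inf inf_le_left (inf_le_right.trans (hF (by omega)))
      have h3 : A (m + 1) ≤ ⨆ j, ⨆ (_ : j ≠ m), A j :=
        le_iSup_of_le (m + 1) (le_iSup_of_le (by omega) le_rfl)
      have := (hind m).mono_right h3
      exact le_bot_iff.mp ((le_inf h1 h2).trans this.le_bot)
    have hgen : ∀ p q : ℤ, q < p → U p ⊓ F q = ⊥ := by
      intro p q h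
      have : U p ⊓ F q ≤ U (q + 1) ⊓ F q :=
        inf_le_inf_right _ (hU (by omega))
      exact le_bot_iff.mp (this.trans (hbot q).le)
    rcases lt_or_gt_of_ne hpq with h | h
    · -- p < q
      intro x hx
      obtain ⟨hxU, hxF⟩ := Submodule.mem_inf.mp hx
      have hsplit : (⊤ : Submodule ℂ H) ≤ (⨆ r, ⨆ (_ : p + 1 ≤ r), A r) ⊔
          (⨆ r, ⨆ (_ : r ≤ p), A r) := by
        rw [← htop]
        refine iSup_le fun r => ?_
        rcases le_or_gt r p with hr | hr
        · exact le_sup_of_le_right (le_iSup_of_le r (le_iSup_of_le hr le_rfl))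
        · exact le_sup_of_le_left (le_iSup_of_le r (le_iSup_of_le (by omega) le_rfl))
      have h2 : (⨆ r, ⨆ (_ : p + 1 ≤ r), A r) ≤ U (p + 1) :=
        iSup₂_le fun r hr => inf_le_left.trans (hU hr)
      have h3 : (⨆ r, ⨆ (_ : r ≤ p), A r) ≤ F p :=
        iSup₂_le fun r hr => inf_le_right.trans (hF hr)
      have hx' : x ∈ U (p + 1) ⊔ F p :=
        (hsplit.trans (sup_le_sup h2 h3)) Submodule.mem_top
      obtain ⟨z, hz, w, hw, hzw⟩ := Submodule.mem_sup.mp hx'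
      -- z ∈ U (p+1), w ∈ F p, x = z + w
      have hwU : w ∈ U p := by
        have : w = x - z := by rw [← hzw]; abel
        rw [this]
        exact Submodule.sub_mem _ hxU ((hU (by omega) : U (p + 1) ≤ U p) hz)
      have hzF : z ∈ F q := by
        have : z = x - w := by rw [← hzw]; abel
        rw [this]
        exact Submodule.sub_mem _ hxF ((hF (by omega) : F p ≤ F q) hw)
      refine Submodule.mem_sup.mpr ⟨z, Submodule.mem_inf.mpr ⟨hz, hzF⟩,
        w, Submodule.mem_inf.mpr ⟨hwU, hF (by omega) hw⟩, hzw⟩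
    · -- q < p : left side is ⊥
      rw [hgen p q h]
      exact bot_le
  · -- vanishing of off-diagonal graded pieces ⇒ internal direct sum
    intro hC
    obtain ⟨PU, hPU⟩ := hUbot
    obtain ⟨QF, hQF⟩ := hFbot
    -- key vanishing: U p ⊓ F q = ⊥ whenever q < p
    have hbot : ∀ p q : ℤ, q < p → U p ⊓ F q = ⊥ := by
      have key : ∀ n : ℕ, ∀ p q : ℤ, q < p → ((PU - p) + (q - QF)).toNat = n →
          U p ⊓ F q = ⊥ := by
        intro n
        induction n using Nat.strong_induction_on with
        | _ n ih =>
          intro p q hlt hn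
          by_cases hp : PU ≤ p
          · exact le_bot_iff.mp (inf_le_left.trans ((hU hp).trans hPU.le))
          by_cases hq : q ≤ QF
          · exact le_bot_iff.mp (inf_le_right.trans ((hF hq).trans hQF.le))
          push_neg at hp hq
          have h1 : U (p + 1) ⊓ F q = ⊥ :=
            ih ((PU - (p + 1)) + (q - QF)).toNat (by omega) (p + 1) q (by omega) rfl
          have h2 : U p ⊓ F (q - 1) = ⊥ :=
            ih ((PU - p) + (q - 1 - QF)).toNat (by omega) p (q - 1) (by omega) rfl
          have := hC p q (by omega)
          rw [h1, h2, sup_bot_eq] at this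
          exact le_bot_iff.mp this
      exact fun p q h => key _ p q h rfl
    constructor
    · -- independence
      intro m
      have hsup : (⨆ j, ⨆ (_ : j ≠ m), A j) ≤ F (m - 1) ⊔ U (m + 1) := by
        refine iSup₂_le fun j hj => ?_
        rcases lt_or_gt_of_ne hj with hjm | hjm
        · exact le_sup_of_le_left (inf_le_right.trans (hF (by omega)))
        · exact le_sup_of_le_right (inf_le_left.trans (hU (by omega)))
      rw [disjoint_iff_inf_le]
      intro x hx
      obtain ⟨hxA, hxs⟩ := Submodule.mem_inf.mp hx
      obtain ⟨hxU, hxF⟩ := Submodule.mem_inf.mp hxA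
      obtain ⟨f, hf, u, hu, hfu⟩ := Submodule.mem_sup.mp (hsup hxs)
      -- x = f + u with f ∈ F (m-1), u ∈ U (m+1)
      have huF : u ∈ F m := by
        have : u = x - f := by rw [← hfu]; abel
        rw [this]
        exact Submodule.sub_mem _ hxF ((hF (by omega) : F (m - 1) ≤ F m) hf)
      have hu0 : u = 0 := by
        have : u ∈ U (m + 1) ⊓ F m := Submodule.mem_inf.mpr ⟨hu, huF⟩
        rw [hbot (m + 1) m (by omega)] at this
        exact this
      have hxf : x = f := by rw [← hfu, hu0, add_zero]
      have : x ∈ U m ⊓ F (m - 1) := Submodule.mem_inf.mpr ⟨hxU, hxf ▸ hf⟩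
      rw [hbot m (m - 1) (by omega)] at this
      exact this
    · -- spanning
      have key2 : ∀ n : ℕ, ∀ p q : ℤ, (q - p).toNat = n → U p ⊓ F q ≤ ⨆ r, A r := by
        intro n
        induction n using Nat.strong_induction_on with
        | _ n ih =>
          intro p q hn
          rcases le_or_gt q p with h | h
          · have : U p ⊓ F q ≤ A q :=
              le_inf (inf_le_left.trans (hU h)) inf_le_right
            exact this.trans (le_iSup A q)
          · refine (hC p q (by omega)).trans (sup_le ?_ ?_)
            · exact ih ((q - (p + 1)).toNat) (by omega) (p + 1) q rfl
            · exact ih ((q - 1 - p).toNat) (by omega) p (q - 1) rfl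
      obtain ⟨PT, hPT⟩ := hUtop
      obtain ⟨QT, hQT⟩ := hFtop
      rw [eq_top_iff]
      have hUt : U (min PT QT) = ⊤ :=
        top_le_iff.mp (hPT ▸ hU (min_le_left PT QT))
      have hFt : F (max PT QT) = ⊤ :=
        top_le_iff.mp (hQT ▸ hF (le_max_right PT QT))
      have : (⊤ : Submodule ℂ H) ≤ U (min PT QT) ⊓ F (max PT QT) := by
        rw [hUt, hFt, inf_idem]
      exact this.trans (key2 _ _ _ rfl)
end

section
/- Let H be a finite-dimensional complex vector space with a finite increasing filtration F and a finite decreasing filtration U. Then the natural sum map ⊕_p (U^p H ∩ F_p H) → H is an isomorphism if and only if for every integer p, the subspaces F_p H and U^{p+1} H are complementary, i.e., F_p H ⊕ U^{p+1} H = H. -/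
/-- For a finite-dimensional complex vector space `H` with a finite increasing filtration `F`
and a finite decreasing filtration `U`, the sum map `⊕_p (U^p ∩ F_p) → H` is an isomorphism
iff `F_p H ⊕ U^{p+1} H = H` for every integer `p`. -/
theorem opposite_iff_isCompl
    (H : Type*) [AddCommGroup H] [Module ℂ H] [FiniteDimensional ℂ H]
    (F U : ℤ → Submodule ℂ H)
    (hF : Monotone F) (hFbot : ∃ n : ℤ, F n = ⊥) (hFtop : ∃ n : ℤ, F n = ⊤)
    (hU : Antitone U) (hUtop : ∃ n : ℤ, U n = ⊤) (hUbot : ∃ n : ℤ, U n = ⊥) :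
    Function.Bijective
        (DirectSum.toModule ℂ ℤ H (fun p : ℤ => (U p ⊓ F p).subtype))
      ↔ ∀ p : ℤ, IsCompl (F p) (U (p + 1)) := by
  set I : ℤ → Submodule ℂ H := fun p => U p ⊓ F p with hI
  have key : Function.Bijective
        (DirectSum.toModule ℂ ℤ H (fun p : ℤ => (I p).subtype))
      ↔ iSupIndep I ∧ iSup I = ⊤ := by
    rw [show Function.Bijective (DirectSum.toModule ℂ ℤ H (fun p : ℤ => (I p).subtype))
        = DirectSum.IsInternal I from rfl]
    exact DirectSum.isInternal_submodule_iff_iSupIndep_and_iSup_eq_top I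
  rw [key]
  constructor
  · rintro ⟨hind, htop⟩ p
    constructor
    · -- disjointness: F p ⊓ U (p+1) ≤ I p ⊓ I (p+1) = ⊥
      have h1 : F p ⊓ U (p + 1) ≤ I p :=
        le_inf (inf_le_right.trans (hU (by linarith))) inf_le_left
      have h2 : F p ⊓ U (p + 1) ≤ I (p + 1) :=
        le_inf inf_le_right (inf_le_left.trans (hF (by linarith)))
      have hd : Disjoint (I p) (I (p + 1)) :=
        hind.pairwiseDisjoint (by simp)
      exact disjoint_iff_inf_le.mpr ((le_inf h1 h2).trans hd.le_bot)
    · -- codisjointness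
      rw [codisjoint_iff, eq_top_iff, ← htop]
      refine iSup_le fun q => ?_
      rcases le_or_gt q p with hq | hq
      · exact le_sup_of_le_left ((inf_le_right).trans (hF hq))
      · exact le_sup_of_le_right ((inf_le_left).trans (hU hq))
  · intro h
    constructor
    · -- independence
      intro p
      have hsup : (⨆ q, ⨆ _ : q ≠ p, I q) ≤ F (p - 1) ⊔ U (p + 1) := by
        refine iSup₂_le fun q hq => ?_
        rcases lt_or_gt_of_ne hq with hlt | hgt
        · exact le_sup_of_le_left ((inf_le_right).trans (hF (by linarith)))
        · exact le_sup_of_le_right ((inf_le_left).trans (hU (by linarith)))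
      rw [disjoint_iff_inf_le]
      have step1 : I p ⊓ (F (p - 1) ⊔ U (p + 1)) ≤ U p ⊓ F (p - 1) := by
        refine le_inf (inf_le_left.trans inf_le_left) ?_
        have hmod : (F (p - 1) ⊔ U (p + 1)) ⊓ F p = F (p - 1) ⊔ (U (p + 1) ⊓ F p) :=
          sup_inf_assoc_of_le _ (hF (by linarith))
        have hdisj : U (p + 1) ⊓ F p = ⊥ := by
          rw [inf_comm]; exact (h p).disjoint.eq_bot
        calc I p ⊓ (F (p - 1) ⊔ U (p + 1))
            ≤ (F (p - 1) ⊔ U (p + 1)) ⊓ F p :=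
              le_inf inf_le_right (inf_le_left.trans inf_le_right)
          _ = F (p - 1) := by rw [hmod, hdisj, sup_bot_eq]
      have hbot : U p ⊓ F (p - 1) = ⊥ := by
        have := (h (p - 1)).disjoint
        rw [sub_add_cancel] at this
        rw [inf_comm]; exact this.eq_bot
      calc I p ⊓ ⨆ q, ⨆ _ : q ≠ p, I q
          ≤ I p ⊓ (F (p - 1) ⊔ U (p + 1)) := inf_le_inf_left _ hsup
        _ ≤ U p ⊓ F (p - 1) := step1
        _ = ⊥ := hbot
    · -- spanning
      obtain ⟨n0, hn0⟩ := hFbot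
      obtain ⟨nT, hnT⟩ := hFtop
      have hstep : ∀ n, n0 ≤ n → F n ≤ iSup I := by
        refine Int.le_induction ?_ ?_
        · rw [hn0]; exact bot_le
        · intro n hn ih
          have hco : F n ⊔ U (n + 1) = ⊤ := (h n).codisjoint.eq_top
          have heq : F (n + 1) = F n ⊔ (U (n + 1) ⊓ F (n + 1)) := by
            rw [← sup_inf_assoc_of_le _ (hF (by linarith)), hco, top_inf_eq]
          rw [heq]
          exact sup_le ih (le_iSup I (n + 1))
      rw [eq_top_iff]
      calc (⊤ : Submodule ℂ H) = F nT := hnT.symm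
        _ ≤ F (max nT n0) := hF (le_max_left _ _)
        _ ≤ iSup I := hstep _ (le_max_right _ _)
end

section
/- Define v^{[r]}_0 := e_0 + s_1 e_1 + Σ_{ν ≥ 0} Σ_{i=2}^r h_i^{(||ν||)}(s_1) (s^ν/ν!) ∂_t^{|ν|−||ν||} e_i, where h_i are formal power series, s^ν = ∏ s_j^{ν_j}, ν! = ∏ ν_j!, ||ν|| = Σ j ν_j, |ν| = Σ ν_j, and h^{(k)} is the k-th derivative. Then ∂_t^{-1} ∂_{s_j} v^{[r]}_0 = ∂_t^{-j} ∂_{s_1}^j v^{[r]}_0 for every j = 2,...,r. -/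
open Fin.NatCast

/-- Monomials in `s_1, …, s_r` (index `0` is unused). -/
abbrev Mon (r : ℕ) := Fin (r + 1) →₀ ℕ

/-- Elements of `G = ⊕_{i=0}^r ℂ[∂_t,∂_t⁻¹] ⊗ ℂ[[s_1,…,s_r]] e_i` (with `∂_t`-support
bounded below), described by their coefficients: the value at `((k, i), μ)` is the
coefficient of `s^μ ∂_t^{-k} e_i`. -/
abbrev SerG (r : ℕ) := (ℤ × Fin (r + 1)) → Mon r → ℂ

/-- `‖ν‖ = ∑_{j=2}^r j ν_j` for the multi-index `ν = (μ_2, …, μ_r)`. -/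
def wnorm (r : ℕ) (μ : Mon r) : ℕ := ∑ j ∈ Finset.Icc 2 r, j * μ (j : Fin (r + 1))

/-- `|ν| = ∑_{j=2}^r ν_j`. -/
def anorm (r : ℕ) (μ : Mon r) : ℕ := ∑ j ∈ Finset.Icc 2 r, μ (j : Fin (r + 1))

/-- `ν! = ∏_{j=2}^r ν_j!`. -/
def mfact (r : ℕ) (μ : Mon r) : ℕ := ∏ j ∈ Finset.Icc 2 r, (μ (j : Fin (r + 1))).factorial

/-- `∂_t⁻¹`. -/
def dtInvOp (r : ℕ) (x : SerG r) : SerG r := fun p => x (p.1 - 1, p.2)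

/-- `t`, acting by `t (∂_t^{-k} e_i) = (k+1) ∂_t^{-k-1} e_i`. -/
noncomputable def tOpF (r : ℕ) (x : SerG r) : SerG r :=
  fun p μ => (p.1 : ℂ) * x (p.1 - 1, p.2) μ

/-- `∂_{s_j}`, acting on the power series coefficients (`∂_{s_j} e_i = 0`). -/
noncomputable def DOp (r : ℕ) (j : Fin (r + 1)) (x : SerG r) : SerG r :=
  fun p μ => ((μ j : ℂ) + 1) * x p (μ + Finsupp.single j 1)

/-- Multiplication by `s_j`. -/
noncomputable def mulS (r : ℕ) (j : Fin (r + 1)) (x : SerG r) : SerG r :=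
  fun p μ => if μ j = 0 then 0 else x p (μ - Finsupp.single j 1)

/-- `v₀^{[r]} = e_0 + s_1 e_1 + ∑_{ν ≥ 0} ∑_{i=2}^r h_i^{(‖ν‖)}(s_1) (s^ν/ν!) ∂_t^{|ν|-‖ν‖} e_i`,
described coefficientwise: the monomial `s^μ` contributes to the `e_i`-component
(`2 ≤ i`) in the `∂_t`-slot `k = ‖ν‖ − |ν|` with `ν = (μ_2,…,μ_r)`, with coefficient
`(1/ν!) ·` (the `μ_1`-th coefficient of `h_i^{(‖ν‖)}`). -/
noncomputable def vr0 (r : ℕ) (h : ℕ → PowerSeries ℂ) : SerG r := fun p μ =>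
  (if p = ((0 : ℤ), (0 : Fin (r + 1))) ∧ μ = 0 then 1 else 0)
  + (if p = ((0 : ℤ), (1 : Fin (r + 1))) ∧ μ = Finsupp.single (1 : Fin (r + 1)) 1 then 1 else 0)
  + (if 2 ≤ (p.2 : ℕ) ∧ μ (0 : Fin (r + 1)) = 0
        ∧ p.1 = ((wnorm r μ : ℤ) - (anorm r μ : ℤ)) then
      ((mfact r μ : ℂ))⁻¹
        * PowerSeries.coeff (R := ℂ) (μ (1 : Fin (r + 1)))
            ((PowerSeries.derivativeFun)^[wnorm r μ] (h (p.2 : ℕ)))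
    else 0)

lemma coeff_deriv_iterate (g : PowerSeries ℂ) (j n : ℕ) :
    PowerSeries.coeff (R := ℂ) n (PowerSeries.derivativeFun^[j] g)
      = (∏ k ∈ Finset.range j, ((n : ℂ) + 1 + k)) * PowerSeries.coeff (R := ℂ) (n + j) g := by
  induction j generalizing g with
  | zero => simp
  | succ m ih =>
    rw [Function.iterate_succ_apply, ih, show PowerSeries.coeff (R := ℂ) (n + m) g.derivativeFun = _
        from PowerSeries.coeff_derivative g (n + m),
      Finset.prod_range_succ, show n + (m + 1) = n + m + 1 from rfl]
    push_cast
    ring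

lemma dtInv_iterate (r : ℕ) (x : SerG r) (n : ℕ) (p : ℤ × Fin (r + 1)) :
    (dtInvOp r)^[n] x p = x (p.1 - n, p.2) := by
  induction n generalizing p with
  | zero => simp
  | succ m ih =>
    rw [Function.iterate_succ_apply', dtInvOp, ih]
    have : p.1 - 1 - (m : ℤ) = p.1 - ((m : ℤ) + 1) := by ring
    simp only [this]
    push_cast
    rfl

lemma DOp_iterate (r : ℕ) (i : Fin (r + 1)) (x : SerG r) (n : ℕ) (p : ℤ × Fin (r + 1))
    (μ : Mon r) :
    (DOp r i)^[n] x p μ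
      = (∏ k ∈ Finset.range n, ((μ i : ℂ) + 1 + k)) * x p (μ + Finsupp.single i n) := by
  induction n generalizing μ with
  | zero => simp
  | succ m ih =>
    rw [Function.iterate_succ_apply', DOp]
    simp only [ih]
    have h1 : ((μ + Finsupp.single i 1 : Mon r)) i = μ i + 1 := by
      rw [Finsupp.add_apply, Finsupp.single_apply, if_pos rfl]
    have h2 : μ + Finsupp.single i 1 + Finsupp.single i m
        = μ + Finsupp.single i (m + 1) := by
      rw [add_assoc, ← Finsupp.single_add, Nat.add_comm 1 m]
    have hp : ∀ k ∈ Finset.range m,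
        (((μ i + 1 : ℕ) : ℂ) + 1 + (k : ℂ)) = ((μ i : ℂ) + 1 + ((k + 1 : ℕ) : ℂ)) := by
      intro k _
      push_cast
      ring
    rw [h1, h2, Finset.prod_range_succ', Finset.prod_congr rfl hp]
    push_cast
    ring

lemma apply_add_single (r : ℕ) {a b : ℕ} (ha : a < r + 1) (hb : b < r + 1) (μ : Mon r)
    (c : ℕ) :
    (μ + Finsupp.single (b : Fin (r + 1)) c) (a : Fin (r + 1))
      = μ (a : Fin (r + 1)) + if a = b then c else 0 := by
  rw [Finsupp.add_apply, Finsupp.single_apply]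
  congr 1
  have hiff : ((b : Fin (r + 1)) = (a : Fin (r + 1))) ↔ a = b := by
    constructor
    · intro hh
      have := congrArg Fin.val hh
      rw [Fin.val_cast_of_lt ha, Fin.val_cast_of_lt hb] at this
      omega
    · intro hh; rw [hh]
  simp [hiff]

/-- `∂_t⁻¹ ∂_{s_j} v₀^{[r]} = ∂_t^{-j} ∂_{s_1}^j v₀^{[r]}` for `j = 2, …, r`. -/
theorem dtinv_dsj_vr0 (r : ℕ) (hr : 2 ≤ r) (h : ℕ → PowerSeries ℂ)
    (j : ℕ) (hj2 : 2 ≤ j) (hjr : j ≤ r) :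
    dtInvOp r (DOp r (j : Fin (r + 1)) (vr0 r h))
      = (dtInvOp r)^[j] ((DOp r (1 : Fin (r + 1)))^[j] (vr0 r h)) := by
  have hjlt : j < r + 1 := by omega
  have h1lt : 1 < r + 1 := by omega
  have h0lt : 0 < r + 1 := by omega
  have h1F : ((1 : ℕ) : Fin (r + 1)) = (1 : Fin (r + 1)) := by push_cast; rfl
  have h0F : ((0 : ℕ) : Fin (r + 1)) = (0 : Fin (r + 1)) := by push_cast; rfl
  funext p μ
  rw [dtInvOp, DOp, dtInv_iterate, DOp_iterate]
  set jF : Fin (r + 1) := (j : Fin (r + 1)) with hjF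
  set ν₁ : Mon r := μ + Finsupp.single jF 1 with hν₁
  set ν₂ : Mon r := μ + Finsupp.single (1 : Fin (r + 1)) j with hν₂
  -- basic coordinate facts
  have hν₁0 : ν₁ (0 : Fin (r + 1)) = μ (0 : Fin (r + 1)) := by
    rw [hν₁, ← h0F, apply_add_single r h0lt hjlt]
    simp; omega
  have hν₁1 : ν₁ (1 : Fin (r + 1)) = μ (1 : Fin (r + 1)) := by
    rw [hν₁, ← h1F, apply_add_single r h1lt hjlt]
    simp; omega
  have hν₁j : ν₁ jF = μ jF + 1 := by
    rw [hν₁, hjF, apply_add_single r hjlt hjlt]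
    simp
  have hν₂0 : ν₂ (0 : Fin (r + 1)) = μ (0 : Fin (r + 1)) := by
    rw [hν₂, ← h1F, ← h0F, apply_add_single r h0lt h1lt]
    simp
  have hν₂1 : ν₂ (1 : Fin (r + 1)) = μ (1 : Fin (r + 1)) + j := by
    rw [hν₂, ← h1F, apply_add_single r h1lt h1lt]
    simp
  have hν₂a : ∀ a : ℕ, a ∈ Finset.Icc 2 r → ν₂ (a : Fin (r + 1)) = μ (a : Fin (r + 1)) := by
    intro a haI
    simp only [Finset.mem_Icc] at haI
    rw [hν₂, ← h1F, apply_add_single r (by omega) h1lt]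
    have : ¬ a = 1 := by omega
    simp [this]
  have hν₁a : ∀ a : ℕ, a ∈ Finset.Icc 2 r →
      ν₁ (a : Fin (r + 1)) = μ (a : Fin (r + 1)) + if a = j then 1 else 0 := by
    intro a haI
    simp only [Finset.mem_Icc] at haI
    rw [hν₁, hjF, apply_add_single r (by omega) hjlt]
  have hjI : j ∈ Finset.Icc 2 r := by simp [Finset.mem_Icc]; omega
  -- norms
  have hw1 : wnorm r ν₁ = wnorm r μ + j := by
    unfold wnorm
    have step : ∀ a ∈ Finset.Icc 2 r,
        a * ν₁ (a : Fin (r + 1)) = a * μ (a : Fin (r + 1)) + if a = j then a else 0 := by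
      intro a haI
      rw [hν₁a a haI, Nat.mul_add]
      congr 1
      split_ifs <;> simp
    rw [Finset.sum_congr rfl step, Finset.sum_add_distrib]
    congr 1
    simp [Finset.sum_ite_eq', hjI]
  have ha1 : anorm r ν₁ = anorm r μ + 1 := by
    unfold anorm
    rw [Finset.sum_congr rfl fun a haI => hν₁a a haI, Finset.sum_add_distrib]
    congr 1
    simp [Finset.sum_ite_eq', hjI]
  have hw2 : wnorm r ν₂ = wnorm r μ :=
    Finset.sum_congr rfl fun a haI => by rw [hν₂a a haI]
  have ha2 : anorm r ν₂ = anorm r μ :=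
    Finset.sum_congr rfl fun a haI => by rw [hν₂a a haI]
  have hm2 : mfact r ν₂ = mfact r μ :=
    Finset.prod_congr rfl fun a haI => by rw [hν₂a a haI]
  have hm1 : mfact r ν₁ = mfact r μ * (μ jF + 1) := by
    unfold mfact
    have step : ∀ a ∈ Finset.Icc 2 r,
        Nat.factorial (ν₁ (a : Fin (r + 1)))
          = Nat.factorial (μ (a : Fin (r + 1))) * (if a = j then μ jF + 1 else 1) := by
      intro a haI
      rw [hν₁a a haI]
      split_ifs with hc
      · subst hc
        rw [← hjF, Nat.factorial_succ]
        ring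
      · simp
    rw [Finset.prod_congr rfl step, Finset.prod_mul_distrib]
    congr 1
    simp [Finset.prod_ite_eq', hjI]
  -- kill the first two summands of vr0 on both sides
  have hν₁ne0 : ν₁ ≠ 0 := by
    intro hc
    have := congrArg (fun f : Mon r => f jF) hc
    simp [hν₁j] at this
  have hjne1 : jF ≠ (1 : Fin (r + 1)) := by
    intro hc
    have := congrArg Fin.val hc
    rw [hjF, Fin.val_cast_of_lt hjlt, ← h1F, Fin.val_cast_of_lt h1lt] at this
    omega
  have hν₁ne1 : ν₁ ≠ Finsupp.single (1 : Fin (r + 1)) 1 := by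
    intro hc
    have := congrArg (fun f : Mon r => f jF) hc
    simp only [hν₁j, Finsupp.single_apply] at this
    rw [if_neg (fun hh => hjne1 hh.symm)] at this
    omega
  have hν₂ne0 : ν₂ ≠ 0 := by
    intro hc
    have := congrArg (fun f : Mon r => f (1 : Fin (r + 1))) hc
    simp [hν₂1] at this
    omega
  have hν₂ne1 : ν₂ ≠ Finsupp.single (1 : Fin (r + 1)) 1 := by
    intro hc
    have := congrArg (fun f : Mon r => f (1 : Fin (r + 1))) hc
    rw [hν₂1, Finsupp.single_apply, if_pos rfl] at this
    omega
  rw [show vr0 r h (p.1 - 1, p.2) ν₁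
      = (if 2 ≤ ((p.1 - 1, p.2).2 : ℕ) ∧ ν₁ (0 : Fin (r + 1)) = 0
        ∧ (p.1 - 1, p.2).1 = ((wnorm r ν₁ : ℤ) - (anorm r ν₁ : ℤ)) then
      ((mfact r ν₁ : ℂ))⁻¹
        * PowerSeries.coeff (R := ℂ) (ν₁ (1 : Fin (r + 1)))
            ((PowerSeries.derivativeFun)^[wnorm r ν₁] (h (p.2 : ℕ)))
    else 0) by
      rw [vr0, if_neg (fun hc => hν₁ne0 hc.2), if_neg (fun hc => hν₁ne1 hc.2)]; ring]
  rw [show vr0 r h (p.1 - j, p.2) ν₂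
      = (if 2 ≤ ((p.1 - j, p.2).2 : ℕ) ∧ ν₂ (0 : Fin (r + 1)) = 0
        ∧ (p.1 - j, p.2).1 = ((wnorm r ν₂ : ℤ) - (anorm r ν₂ : ℤ)) then
      ((mfact r ν₂ : ℂ))⁻¹
        * PowerSeries.coeff (R := ℂ) (ν₂ (1 : Fin (r + 1)))
            ((PowerSeries.derivativeFun)^[wnorm r ν₂] (h (p.2 : ℕ)))
    else 0) by
      rw [vr0, if_neg (fun hc => hν₂ne0 hc.2), if_neg (fun hc => hν₂ne1 hc.2)]; ring]
  simp only [hν₁0, hν₁1, hν₂0, hν₂1, hw1, ha1, hw2, ha2, hm1, hm2]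
  have hcond : (2 ≤ ((p.1 - 1, p.2).2 : ℕ) ∧ μ (0 : Fin (r + 1)) = 0
        ∧ (p.1 - 1, p.2).1 = (((wnorm r μ + j : ℕ) : ℤ) - ((anorm r μ + 1 : ℕ) : ℤ)))
      ↔ (2 ≤ ((p.1 - j, p.2).2 : ℕ) ∧ μ (0 : Fin (r + 1)) = 0
        ∧ (p.1 - j, p.2).1 = ((wnorm r μ : ℤ) - (anorm r μ : ℤ))) := by
    constructor <;> (rintro ⟨a, b, c⟩; refine ⟨a, b, ?_⟩; push_cast at c ⊢; omega)
  rw [if_congr hcond rfl rfl]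
  split_ifs with hC
  · -- values
    rw [show wnorm r μ + j = j + wnorm r μ from Nat.add_comm _ _,
      Function.iterate_add_apply, coeff_deriv_iterate]
    have hmne : ((mfact r μ : ℂ)) ≠ 0 := by
      have := Finset.prod_ne_zero_iff.mpr
        (fun a (_ : a ∈ Finset.Icc 2 r) => Nat.factorial_ne_zero (μ (a : Fin (r+1))))
      unfold mfact
      push_cast
      exact_mod_cast Nat.cast_ne_zero.mpr this
    have hμj1 : ((μ jF : ℂ) + 1) ≠ 0 := by
      exact Nat.cast_add_one_ne_zero (μ jF)
    push_cast
    field_simp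
  · simp
end

section
/- With v^{[r]}_0 as above, (t − ∂_t^{-1}) v^{[r]}_0 = Σ_{j=2}^r (j−1) s_j ∂_t^{-1} ∂_{s_j} v^{[r]}_0, where t acts by t(∂_t^{-k}e_i) = (k+1)∂_t^{-k-1}e_i (so that t − ∂_t^{-1} acts on the coefficient of ∂_t^{-k}e_i as k∂_t^{-1}). -/
open Fin.NatCast

lemma summand_eq (r : ℕ) (j : Fin (r + 1)) (x : SerG r) (p : ℤ × Fin (r+1)) (μ : Mon r) :
    mulS r j (dtInvOp r (DOp r j x)) p μ = (μ j : ℂ) * x (p.1 - 1, p.2) μ := by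
  unfold mulS dtInvOp DOp
  by_cases hj : μ j = 0
  · simp [hj]
  · simp only [hj, if_false]
    have h1 : ((μ - Finsupp.single j 1 : Mon r)) j = μ j - 1 := by simp
    have h2 : ((μ - Finsupp.single j 1 : Mon r)) + Finsupp.single j 1 = μ := by
      ext k
      by_cases hk : k = j
      · subst hk; simp [Nat.sub_add_cancel (Nat.one_le_iff_ne_zero.mpr hj)]
      · simp [Finsupp.single_apply, Ne.symm hk]
    rw [h1, h2]
    have : ((μ j - 1 : ℕ) : ℂ) + 1 = (μ j : ℂ) := by
      rw [Nat.cast_sub (Nat.one_le_iff_ne_zero.mpr hj)]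
      ring
    rw [this]

lemma key (r : ℕ) (h : ℕ → PowerSeries ℂ) (q : ℤ × Fin (r + 1)) (μ : Mon r) :
    (q.1 : ℂ) * vr0 r h q μ
      = (∑ j ∈ Finset.Icc 2 r, ((j : ℂ) - 1) * (μ (j : Fin (r + 1)) : ℂ)) * vr0 r h q μ := by
  by_cases hA : q = ((0 : ℤ), (0 : Fin (r + 1))) ∧ μ = 0
  · rw [hA.1, hA.2]
    simp
  by_cases hB : q = ((0 : ℤ), (1 : Fin (r + 1))) ∧ μ = Finsupp.single (1 : Fin (r + 1)) 1
  · rw [hB.1, hB.2]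
    have hsum : ∀ j ∈ Finset.Icc 2 r,
        (Finsupp.single (1 : Fin (r + 1)) 1 : Mon r) (j : Fin (r + 1)) = 0 := by
      intro j hj
      obtain ⟨hj2, hjr⟩ := Finset.mem_Icc.mp hj
      apply Finsupp.single_eq_of_ne'
      intro heq
      have h1 : ((1 : Fin (r + 1)) : ℕ) = 1 := by
        simp [Fin.val_one', Nat.mod_eq_of_lt (show 1 < r + 1 by omega)]
      have h2 : (((j : ℕ) : Fin (r + 1)) : ℕ) = j := Fin.val_cast_of_lt (by omega)
      rw [heq] at h1
      omega
    rw [Finset.sum_congr rfl fun j hj => by rw [hsum j hj]]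
    simp
  by_cases hC : 2 ≤ (q.2 : ℕ) ∧ μ (0 : Fin (r + 1)) = 0
      ∧ q.1 = ((wnorm r μ : ℤ) - (anorm r μ : ℤ))
  · congr 1
    rw [hC.2.2]
    push_cast [wnorm, anorm]
    rw [← Finset.sum_sub_distrib]
    exact Finset.sum_congr rfl fun j _ => by ring
  · have hv : vr0 r h q μ = 0 := by
      unfold vr0
      rw [if_neg hA, if_neg hB, if_neg hC]
      ring
    rw [hv, mul_zero, mul_zero]


/-- `(t − ∂_t⁻¹) v₀^{[r]} = ∑_{j=2}^r (j−1) s_j ∂_t⁻¹ ∂_{s_j} v₀^{[r]}`. -/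
theorem t_sub_dtinv_vr0 (r : ℕ) (hr : 2 ≤ r) (h : ℕ → PowerSeries ℂ) :
    tOpF r (vr0 r h) - dtInvOp r (vr0 r h)
      = ∑ j ∈ Finset.Icc 2 r,
          ((j : ℂ) - 1) • mulS r (j : Fin (r + 1))
            (dtInvOp r (DOp r (j : Fin (r + 1)) (vr0 r h))) := by

  funext p μ
  simp only [Pi.sub_apply, Finset.sum_apply, Pi.smul_apply, smul_eq_mul, summand_eq]
  show tOpF r (vr0 r h) p μ - dtInvOp r (vr0 r h) p μ = _
  unfold tOpF dtInvOp
  have hkey := key r h (p.1 - 1, p.2) μ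
  have hc : (((p.1 - 1 : ℤ)) : ℂ) = (p.1 : ℂ) - 1 := by push_cast; ring
  rw [hc] at hkey
  calc (p.1 : ℂ) * vr0 r h (p.1 - 1, p.2) μ - vr0 r h (p.1 - 1, p.2) μ
      = ((p.1 : ℂ) - 1) * vr0 r h (p.1 - 1, p.2) μ := by ring
    _ = (∑ j ∈ Finset.Icc 2 r, ((j : ℂ) - 1) * (μ (j : Fin (r + 1)) : ℂ))
          * vr0 r h (p.1 - 1, p.2) μ := hkey
    _ = _ := by rw [Finset.sum_mul]; exact Finset.sum_congr rfl fun j _ => by ring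
end

section
/- Let Γ act on pairs: given (alpha, beta, gamma) ∈ C^3 and h ∈ C[[s_1]] with h(0)=h'(0)=0, define g_1 = (s_1 + γh(s_1))/(1 + αs_1 + βh(s_1)) and g~ = h(s_1)/(1 + αs_1 + βh(s_1)) (well-defined formal power series since the denominator has constant term 1). Then applying a second triple (α',β',γ') to the resulting configuration and clearing denominators yields the configuration associated to the triple (α+α', β+β'+γα', γ+γ'); i.e., the assignment is a (contravariant) action of the group of unipotent lower-triangular 3×3 matrices. -/
open PowerSeries

/-- Contravariance of the `Γ`-action on configurations `(1, s + γh, h)`: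
applying `(α',β',γ')` to the normalized configuration obtained from `(α,β,γ)` and clearing
the denominator `d = 1 + αs + βh` yields the configuration of the product triple
`(α+α', β+β'+γα', γ+γ')`. -/
theorem gamma_action_contravariant
    (α β γ α' β' γ' : ℂ) (h : PowerSeries ℂ)
    (h0 : PowerSeries.coeff 0 h = 0) (h1 : PowerSeries.coeff 1 h = 0) :
    letI d : PowerSeries ℂ := 1 + PowerSeries.C α * PowerSeries.X + PowerSeries.C β * h
    letI g₁ : PowerSeries ℂ := d⁻¹ * (PowerSeries.X + PowerSeries.C γ * h)
    letI gt : PowerSeries ℂ := d⁻¹ * h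
    d * (1 + PowerSeries.C α' * g₁ + PowerSeries.C β' * gt)
        = 1 + PowerSeries.C (α + α') * PowerSeries.X + PowerSeries.C (β + β' + γ * α') * h
      ∧ d * (g₁ + PowerSeries.C γ' * gt) = PowerSeries.X + PowerSeries.C (γ + γ') * h
      ∧ d * gt = h := by
  set d : PowerSeries ℂ := 1 + PowerSeries.C α * PowerSeries.X + PowerSeries.C β * h with hd
  have hdu : d * d⁻¹ = 1 := by
    apply PowerSeries.mul_inv_cancel
    simp [hd, h0, PowerSeries.constantCoeff_X, ← PowerSeries.coeff_zero_eq_constantCoeff]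
  have key : ∀ x : PowerSeries ℂ, d * (d⁻¹ * x) = x := fun x => by
    rw [← mul_assoc, hdu, one_mul]
  refine ⟨?_, ?_, key h⟩
  · calc d * (1 + PowerSeries.C α' * (d⁻¹ * (PowerSeries.X + PowerSeries.C γ * h))
          + PowerSeries.C β' * (d⁻¹ * h))
        = d + PowerSeries.C α' * (d * (d⁻¹ * (PowerSeries.X + PowerSeries.C γ * h)))
          + PowerSeries.C β' * (d * (d⁻¹ * h)) := by ring
      _ = d + PowerSeries.C α' * (PowerSeries.X + PowerSeries.C γ * h)
          + PowerSeries.C β' * h := by rw [key, key]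
      _ = _ := by rw [hd]; simp [map_add, map_mul]; ring
  · calc d * (d⁻¹ * (PowerSeries.X + PowerSeries.C γ * h) + PowerSeries.C γ' * (d⁻¹ * h))
        = d * (d⁻¹ * (PowerSeries.X + PowerSeries.C γ * h))
          + PowerSeries.C γ' * (d * (d⁻¹ * h)) := by ring
      _ = (PowerSeries.X + PowerSeries.C γ * h) + PowerSeries.C γ' * h := by rw [key, key]
      _ = _ := by simp [map_add]; ring
end
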